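/- Let S be a σ-invariant subset of C_s(G,X) satisfying the compactness axiom and let X be locally compact. If A ⊆ X is relatively compact and weakly invariant with respect to S, then its closure Ā is also weakly invariant with respect to S. -/

import Mathlib

open Set Filter Topology TopologicalSpace

namespace Yorke

/-- The space `X̂ = X ∪ {ω}`, encoded as `Option X` with `ω = none`.  Its open sets are
`X̂` itself together with the open sets of `X`. -/
instance hatTopology (X : Type*) [TopologicalSpace X] : TopologicalSpace (Option X) :=
  TopologicalSpace.generateFrom
    ({Set.univ} ∪ {s : Set (Option X) | ∃ u : Set X, IsOpen u ∧ s = (Option.some : X → Option X) '' u})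

/-- The space `C_p(G,X)` of partial maps from `G` to `X` (continuous maps defined on a
nonempty open subset of `G`), encoded via the bijection `μ` with the subspace
`{f : C(G,X̂) | f⁻¹(X) ≠ ∅}` of `C(G,X̂)`; it carries the compact-open topology. -/
abbrev Cp (G X : Type*) [TopologicalSpace G] [TopologicalSpace X] : Type _ :=
  {f : C(G, Option X) // {g : G | f g ≠ none}.Nonempty}

variable {G X : Type*} [TopologicalSpace G] [TopologicalSpace X]

/-- The domain of a partial map. -/
def dom (φ : Cp G X) : Set G := {g : G | φ.1 g ≠ none}

/-- A partial map with nonempty connected domain is maximally defined if every partial map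
with nonempty connected domain which extends it is equal to it. -/
def MaximallyDefined (φ : Cp G X) : Prop :=
  IsConnected (dom φ) ∧
    ∀ ψ : Cp G X, IsConnected (dom ψ) → dom φ ⊆ dom ψ →
      (∀ g ∈ dom φ, φ.1 g = ψ.1 g) → φ = ψ

/-- The space `C_s(G,X)` of maximally defined partial maps, with the subspace topology. -/
abbrev Cs (G X : Type*) [TopologicalSpace G] [TopologicalSpace X] : Type _ :=
  {φ : Cp G X // MaximallyDefined φ}

/-- The orbit `O(φ) = {φ(g) : g ∈ dom φ}`. -/
def orbit (φ : Cs G X) : Set X := {x : X | ∃ g : G, φ.1.1 g = some x}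

/-- The star-construction `S*W = {(g,φ) : φ ∈ S, g ∈ dom φ, (g,φ(g)) ∈ W}`. -/
def star (S : Set (Cs G X)) (W : Set (G × X)) : Set (G × Cs G X) :=
  {p : G × Cs G X | p.2 ∈ S ∧ ∃ x : X, p.2.1.1 p.1 = some x ∧ (p.1, x) ∈ W}

/-- `S` satisfies the compactness axiom if `S*W` is compact for every compact `W`. -/
def CompactnessAxiom (S : Set (Cs G X)) : Prop :=
  ∀ W : Set (G × X), IsCompact W → IsCompact (star S W)

/-- `S` satisfies the existence axiom on `W` if `S*{(t,x)}` is nonempty for all `(t,x) ∈ W`. -/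
def ExistenceAxiom (S : Set (Cs G X)) (W : Set (G × X)) : Prop :=
  ∀ p ∈ W, (star S {p}).Nonempty

/-- `S` satisfies the uniqueness axiom on `W` if `S*{(t,x)}` is empty or a singleton. -/
def UniquenessAxiom (S : Set (Cs G X)) (W : Set (G × X)) : Prop :=
  ∀ p ∈ W, (star S {p}).Subsingleton

section GroupPart

variable {G X : Type*} [TopologicalSpace X] [Group G] [TopologicalSpace G] [IsTopologicalGroup G]

/-- The shift `σ(g,φ)`, the partial map `x ↦ φ(xg)` with domain `(dom φ)g⁻¹`. -/
def shift (g : G) (φ : Cp G X) : Cp G X :=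
  ⟨⟨fun x => φ.1 (x * g), φ.1.continuous.comp (continuous_mul_right g)⟩, by
    obtain ⟨g₀, hg₀⟩ := φ.2
    exact ⟨g₀ * g⁻¹, by simpa [inv_mul_cancel_right] using hg₀⟩⟩

/-- `S ⊆ C_s(G,X)` is `σ`-invariant if `σ(g,φ) ∈ S` for all `g ∈ G`, `φ ∈ S`. -/
def SigmaInvariant (S : Set (Cs G X)) : Prop :=
  ∀ (g : G) (φ : Cs G X), φ ∈ S → ∃ ψ : Cs G X, ψ ∈ S ∧ ψ.1 = shift g φ.1

/-- `A ⊆ X` is weakly invariant with respect to `S` if every `x ∈ A` is the value at the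
identity of some `φ ∈ S` with `O(φ) ⊆ A`. -/
def WeaklyInvariant (S : Set (Cs G X)) (A : Set X) : Prop :=
  ∀ x ∈ A, ∃ φ ∈ S, φ.1.1 (1 : G) = some x ∧ orbit φ ⊆ A

/-- `x` is an equilibrium of `S` if some `φ ∈ S` has `φ(e) = x` and `O(φ) = {x}`. -/
def Equilibrium (S : Set (Cs G X)) (x : X) : Prop :=
  ∃ φ ∈ S, φ.1.1 (1 : G) = some x ∧ orbit φ = {x}

/-- The set of motions `{π(·,x) : x ∈ X} ⊆ C_s(G,X)` of a `G`-action `π`. -/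
def actionSet (π : G × X → X) : Set (Cs G X) :=
  {φ : Cs G X | ∃ x : X, ∀ g : G, φ.1.1 g = some (π (g, x))}

end GroupPart

/-- An isomorphism `<H,k,η> : S*W → S'*W'` of star-constructions: the three maps are
homeomorphisms satisfying `ev ∘ H = k ∘ ev` and `p ∘ H = η ∘ p`. -/
structure StarIso {G X G' X' : Type*} [TopologicalSpace G] [TopologicalSpace X]
    [TopologicalSpace G'] [TopologicalSpace X']
    (S : Set (Cs G X)) (W : Set (G × X)) (S' : Set (Cs G' X')) (W' : Set (G' × X')) where
  H : ↥(star S W) ≃ₜ ↥(star S' W')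
  k : ↥W ≃ₜ ↥W'
  η : ↥S ≃ₜ ↥S'
  ev_comm : ∀ (q : ↥(star S W)) (x : X), q.1.2.1.1 q.1.1 = some x →
      ∀ hW : (q.1.1, x) ∈ W, ∀ x' : X', (H q).1.2.1.1 (H q).1.1 = some x' →
      ((k ⟨(q.1.1, x), hW⟩ : ↥W') : G' × X') = ((H q).1.1, x')
  p_comm : ∀ q : ↥(star S W), (H q).1.2 = ((η ⟨q.1.2, q.2.1⟩ : ↥S') : Cs G' X')

/-- A map `k = (τ,h) : W → W'` preserves phase space if `h(g,x)` does not depend on `g`. -/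
def PreservesPhase {G X G' X' : Type*} [TopologicalSpace G] [TopologicalSpace X]
    [TopologicalSpace G'] [TopologicalSpace X'] {W : Set (G × X)} {W' : Set (G' × X')}
    (k : ↥W → ↥W') : Prop :=
  ∀ w w' : ↥W, (w : G × X).2 = (w' : G × X).2 →
    ((k w : ↥W') : G' × X').2 = ((k w' : ↥W') : G' × X').2

/-- Two continuous maps are isotopic if they are connected by a continuous family of
homeomorphisms parametrized by `[0,1]`. -/
def Isotopic {A B : Type*} [TopologicalSpace A] [TopologicalSpace B] (f₀ f₁ : A → B) : Prop :=
  ∃ F : unitInterval × A → B, Continuous F ∧ (∀ a, F (0, a) = f₀ a) ∧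
    (∀ a, F (1, a) = f₁ a) ∧ ∀ s : unitInterval, IsHomeomorph fun a => F (s, a)

/-- Basic open sets of the hat topology are open. -/
lemma isOpen_some_image {X : Type*} [TopologicalSpace X] {u : Set X} (hu : IsOpen u) :
    IsOpen ((Option.some : X → Option X) '' u) :=
  TopologicalSpace.GenerateOpen.basic _ (Or.inr ⟨u, hu, rfl⟩)

/-- The coercion `some : X → Option X` is continuous for the hat topology. -/
lemma continuous_hat_some {X : Type*} [TopologicalSpace X] :
    Continuous (Option.some : X → Option X) := by
  apply continuous_generateFrom_iff.mpr
  rintro s (rfl | ⟨u, hu, rfl⟩)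
  · exact isOpen_univ
  · rwa [Set.preimage_image_eq u (Option.some_injective X)]

/-- Evaluating at a fixed point is continuous from `G × Cs G X` to `Option X`. -/
lemma continuous_eval_fixed {G X : Type*} [TopologicalSpace G] [TopologicalSpace X] (g : G) :
    Continuous fun p : G × Cs G X => p.2.1.1 g :=
  (continuous_eval_const g).comp
    (continuous_subtype_val.comp (continuous_subtype_val.comp continuous_snd))

end Yorke

namespace Yorke

variable {G X : Type*} [Group G] [TopologicalSpace G] [IsTopologicalGroup G]
  [LocallyCompactSpace G] [SecondCountableTopology G] [T2Space G]
  [MetricSpace X] [SecondCountableTopology X]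

/-- For a `σ`-invariant `S` satisfying the compactness axiom on a locally compact `X`, the
closure of a relatively compact weakly invariant set is weakly invariant. -/
theorem statement_12 [LocallyCompactSpace X] (S : Set (Cs G X)) (hσ : SigmaInvariant S)
    (hcomp : CompactnessAxiom S) (A : Set X) (hA : IsCompact (closure A))
    (hinv : WeaklyInvariant S A) : WeaklyInvariant S (closure A) := by
  intro x hx
  -- choose motions for points of `A`
  set Φ : A → Cs G X := fun a => (hinv a a.2).choose with hΦ
  have hΦS : ∀ a : A, Φ a ∈ S := fun a => (hinv a a.2).choose_spec.1
  have hΦe : ∀ a : A, (Φ a).1.1 (1 : G) = some (a : X) :=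
    fun a => (hinv a a.2).choose_spec.2.1
  have hΦO : ∀ a : A, orbit (Φ a) ⊆ A := fun a => (hinv a a.2).choose_spec.2.2
  -- the filter of approximation of `x` by points of `A`
  set F : Filter A := Filter.comap Subtype.val (𝓝 x) with hF
  haveI hFne : F.NeBot := mem_closure_iff_comap_neBot.mp hx
  have hFval : Filter.Tendsto (Subtype.val : A → X) F (𝓝 x) := Filter.tendsto_comap
  -- the compact set `W = {1} × closure A` and the filter on `star S W`
  set W : Set (G × X) := ({(1 : G)} : Set G) ×ˢ closure A with hW
  have hWc : IsCompact W := isCompact_singleton.prod hA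
  have hSWc : IsCompact (star S W) := hcomp W hWc
  set L : Filter (G × Cs G X) := Filter.map (fun a : A => ((1 : G), Φ a)) F with hL
  haveI : L.NeBot := Filter.NeBot.map hFne _
  have hmem : ∀ a : A, ((1 : G), Φ a) ∈ star S W := by
    intro a
    exact ⟨hΦS a, (a : X), hΦe a, by
      exact ⟨rfl, subset_closure a.2⟩⟩
  have hLP : L ≤ Filter.principal (star S W) := by
    rw [hL, Filter.le_principal_iff, Filter.mem_map]
    exact Filter.univ_mem' fun a => hmem a
  obtain ⟨⟨g, ψ⟩, hgψ, hcl⟩ := hSWc.exists_clusterPt hLP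
  obtain ⟨hψS, x', hψx', hgx'W⟩ := hgψ
  -- `g = 1`
  have hg1 : g = 1 := by
    have h1 : L ≤ Filter.principal (({(1 : G)} : Set G) ×ˢ (Set.univ : Set (Cs G X))) := by
      rw [hL, Filter.le_principal_iff, Filter.mem_map]
      exact Filter.univ_mem' fun a => ⟨rfl, trivial⟩
    have hcl' : (g, ψ) ∈ closure (({(1 : G)} : Set G) ×ˢ (Set.univ : Set (Cs G X))) :=
      mem_closure_iff_clusterPt.mpr (hcl.mono h1)
    have : IsClosed (({(1 : G)} : Set G) ×ˢ (Set.univ : Set (Cs G X))) :=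
      isClosed_singleton.prod isClosed_univ
    exact (this.closure_eq ▸ hcl').1
  subst hg1
  -- key claim: every value of `ψ` lies in `closure A` (after coercion), and `ψ 1 = some x`.
  -- First, a general cluster point transfer for evaluation at a fixed `g'`.
  have key : ∀ g' : G, ClusterPt (ψ.1.1 g') (Filter.map (fun a : A => (Φ a).1.1 g') F) := by
    intro g'
    have := hcl.map (f := fun p : G × Cs G X => p.2.1.1 g')
      ((continuous_eval_fixed g').continuousAt)
      (le_of_eq (by rw [hL, Filter.map_map]))
    exact this
  refine ⟨ψ, hψS, ?_, ?_⟩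
  · -- ψ(1) = some x: show x' = x
    have hx'x : x' = x := by
      by_contra hne
      obtain ⟨u, v, hu, hv, hxu, hxv, huv⟩ := t2_separation hne
      have h1 : ClusterPt (some x') (Filter.map (fun a : A => some ((a : X))) F) := by
        have := key 1
        rw [hψx'] at this
        convert this using 2
        ext a
        rw [hΦe a]
      have h2 : Filter.Tendsto (fun a : A => some ((a : X))) F (𝓝 (some x)) :=
        (continuous_hat_some.continuousAt).tendsto.comp hFval
      have hne2 : (𝓝 (some x') ⊓ Filter.map (fun a : A => some ((a : X))) F).NeBot := h1
      have hu' : (Option.some '' u) ∈ 𝓝 (some x') :=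
        (isOpen_some_image hu).mem_nhds ⟨x', hxu, rfl⟩
      have hv' : (Option.some '' v) ∈ Filter.map (fun a : A => some ((a : X))) F :=
        h2 ((isOpen_some_image hv).mem_nhds ⟨x, hxv, rfl⟩)
      obtain ⟨t, ⟨y1, hy1, ht1⟩, ⟨y2, hy2, ht2⟩⟩ :=
        hne2.nonempty_of_mem (Filter.inter_mem_inf hu' hv')
      rw [← ht2] at ht1
      rw [Option.some_injective X ht1] at hy1
      exact Set.disjoint_left.mp huv hy1 hy2
    rw [hψx', hx'x]
  · -- orbit ψ ⊆ closure A
    rintro y ⟨g', hg'⟩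
    rw [mem_closure_iff]
    intro o ho hyo
    have h1 : ClusterPt (some y) (Filter.map (fun a : A => (Φ a).1.1 g') F) := by
      have := key g'; rwa [hg'] at this
    have hne2 : (𝓝 (some y) ⊓ Filter.map (fun a : A => (Φ a).1.1 g') F).NeBot := h1
    have ho' : (Option.some '' o) ∈ 𝓝 (some y) :=
      (isOpen_some_image ho).mem_nhds ⟨y, hyo, rfl⟩
    have hT : {t : Option X | t = none ∨ ∃ z ∈ A, t = some z} ∈
        Filter.map (fun a : A => (Φ a).1.1 g') F := by
      rw [Filter.mem_map]
      apply Filter.univ_mem'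
      intro a
      simp only [Set.mem_preimage, Set.mem_setOf_eq]
      cases h : (Φ a).1.1 g' with
      | none => exact Or.inl rfl
      | some z => exact Or.inr ⟨z, hΦO a ⟨g', h⟩, rfl⟩
    obtain ⟨t, ⟨z, hz, htz⟩, ht⟩ := hne2.nonempty_of_mem (Filter.inter_mem_inf ho' hT)
    rcases ht with ht | ⟨w, hwA, htw⟩
    · rw [ht] at htz; exact absurd htz (by simp)
    · rw [htw] at htz
      rw [← Option.some_injective X htz] at hwA
      exact ⟨z, hz, hwA⟩

end Yorke
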